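/- Let H be a real Hilbert space and f : H → ℝ ∪ {+∞} a function with f(0) ∈ ℝ. Then 0 ∈ prox_f(q) for all q ∈ H if and only if f is of the form f(x) = f(0) + δ_{{0}}(x), i.e. f(x) = +∞ for all x ≠ 0. -/

import Mathlib

/-- `u ∈ prox_f(q)` on a real Hilbert space `H`: `u` is a global minimizer of
`x ↦ ½‖x − q‖² + f(x)`, where `f : H → ℝ ∪ {+∞}` is modeled as `EReal`-valued. -/
def IsProxH {H : Type*} [NormedAddCommGroup H] [InnerProductSpace ℝ H]
    (f : H → EReal) (q u : H) : Prop :=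
  ∀ x : H, ((‖u - q‖ ^ 2 / 2 : ℝ) : EReal) + f u ≤ ((‖x - q‖ ^ 2 / 2 : ℝ) : EReal) + f x

/-- for `f : H → ℝ ∪ {+∞}` with `f 0` finite, `0 ∈ prox_f(q)` for all `q ∈ H`
if and only if `f` is of the form `f(x) = f(0) + δ_{{0}}(x)`, i.e. `f x = +∞` for all `x ≠ 0`. -/
theorem zero_mem_prox_iff {H : Type*} [NormedAddCommGroup H] [InnerProductSpace ℝ H]
    [CompleteSpace H] (f : H → EReal) (hf0 : ∃ r : ℝ, f 0 = (r : EReal)) :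
    (∀ q : H, IsProxH f q 0) ↔ (∀ x : H, x ≠ 0 → f x = ⊤) := by
  obtain ⟨r, hr⟩ := hf0
  constructor
  · intro h x hx
    by_contra hne
    have hxn : ‖x‖ ≠ 0 := norm_ne_zero_iff.mpr hx
    have hc : (0:ℝ) < ‖x‖ ^ 2 := by positivity
    have hbot : f x ≠ ⊥ := by
      intro hb
      have := h 0 x
      rw [hr, hb] at this
      simp at this
    obtain ⟨s, hs⟩ : ∃ s : ℝ, f x = (s : EReal) := by
      cases hfx : f x with
      | bot => exact absurd hfx hbot
      | top => exact absurd hfx hne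
      | coe s => exact ⟨s, rfl⟩
    set t : ℝ := (s - r) / ‖x‖ ^ 2 + 1 with ht
    have key := h (t • x) x
    rw [hr, hs] at key
    rw [zero_sub, norm_neg, show x - t • x = (1 - t) • x by module] at key
    rw [norm_smul, norm_smul] at key
    rw [← EReal.coe_add, ← EReal.coe_add, EReal.coe_le_coe_iff] at key
    simp only [Real.norm_eq_abs] at key
    have h1 : |t| ^ 2 = t ^ 2 := sq_abs t
    have h2 : |1 - t| ^ 2 = (1 - t) ^ 2 := sq_abs _
    have ht2 : t * ‖x‖ ^ 2 = (s - r) + ‖x‖ ^ 2 := by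
      rw [ht, add_mul, div_mul_cancel₀ _ (ne_of_gt hc)]
      ring
    nlinarith [key, sq_nonneg (t * ‖x‖), sq_nonneg ((1 - t) * ‖x‖)]
  · intro h q x
    by_cases hx : x = 0
    · subst hx; exact le_refl _
    · rw [h x hx]
      rw [hr, ← EReal.coe_add]
      simp
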